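/- Let $h_1, \dots, h_k : \mathbb{R}^m \to \mathbb{R}$ be continuously differentiable, let $\mathcal{Y} = \{y : h_i(y) \le 0, \ i = 1, \dots, k\}$, and let $K \subset \mathbb{R}^m$ be compact with $\mathcal{Y} \subset \mathrm{int}(K)$. Assume that at every $y \in \mathcal{Y}$ the gradients of the active constraints are linearly independent. Then there exist constants $\rho > 0$ and $\sigma_* > 0$ such that for every $y \in K$ with $\max_{1 \le i \le k} h_i(y) \le \rho$ and every nonempty index set $J \subseteq \{1,\dots,k\}$ with $|h_j(y)| \le \rho$ for all $j \in J$, the smallest singular value of the matrix whose rows are $\nabla h_j(y)^\top$, $j \in J$, is at least $\sigma_*$. -/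

import Mathlib

open scoped Classical

private lemma grad_cont' {m : ℕ} {f : EuclideanSpace ℝ (Fin m) → ℝ} (hf : ContDiff ℝ 1 f) :
    Continuous (fun y => gradient f y) := by
  have h1 : Continuous (fun y => fderiv ℝ f y) := hf.continuous_fderiv one_ne_zero
  exact ((InnerProductSpace.toDual ℝ (EuclideanSpace ℝ (Fin m))).symm.continuous).comp h1

private lemma perJ {m k : ℕ}
    (h : Fin k → EuclideanSpace ℝ (Fin m) → ℝ)
    (hh : ∀ i, ContDiff ℝ 1 (h i))
    (K : Set (EuclideanSpace ℝ (Fin m)))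
    (hK : IsCompact K)
    (licq : ∀ y, (∀ i, h i y ≤ 0) →
      LinearIndependent ℝ (fun i : {i : Fin k // h i y = 0} => gradient (h i.1) y))
    (J : Finset (Fin k)) :
    ∃ t > (0:ℝ), ∀ y ∈ K, (∀ i, h i y ≤ t) → (∀ j ∈ J, |h j y| ≤ t) →
      ∀ c : EuclideanSpace ℝ (Fin k), (∀ i, i ∉ J → c i = 0) → ‖c‖ = 1 →
        t ≤ ‖∑ j ∈ J, c j • gradient (h j) y‖ := by
  by_contra h0
  push_neg at h0
  -- the "bad" sets
  let E := EuclideanSpace ℝ (Fin m)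
  let F := EuclideanSpace ℝ (Fin k)
  set u : ℕ → ℝ := fun n => 1 / (n + 1) with hu
  have hupos : ∀ n, 0 < u n := fun n => by positivity
  have humono : ∀ n, u (n + 1) ≤ u n := by
    intro n
    apply one_div_le_one_div_of_le (by positivity)
    push_cast; linarith
  set A : ℕ → Set (E × F) := fun n =>
    (K ×ˢ Metric.sphere (0:F) 1) ∩
    ((⋂ i, {p : E × F | h i p.1 ≤ u n}) ∩
    ((⋂ j ∈ J, {p : E × F | |h j p.1| ≤ u n}) ∩
    ((⋂ i ∈ (Finset.univ \ J), {p : E × F | p.2 i = 0}) ∩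
    {p : E × F | ‖∑ j ∈ J, p.2 j • gradient (h j) p.1‖ ≤ u n}))) with hA
  have hclosed : ∀ n, IsClosed (A n) := by
    intro n
    refine ((hK.prod (isCompact_sphere _ _)).isClosed).inter ?_
    refine IsClosed.inter (isClosed_iInter fun i =>
      isClosed_le ((hh i).continuous.comp continuous_fst) continuous_const) ?_
    refine IsClosed.inter (isClosed_biInter fun j _ =>
      isClosed_le (continuous_abs.comp ((hh j).continuous.comp continuous_fst))
        continuous_const) ?_
    refine IsClosed.inter (isClosed_biInter fun i _ =>
      isClosed_eq ((PiLp.continuous_apply 2 _ i).comp continuous_snd) continuous_const) ?_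
    refine isClosed_le ?_ continuous_const
    refine (continuous_finset_sum J fun j _ => ?_).norm
    exact ((PiLp.continuous_apply 2 _ j).comp continuous_snd).smul
      ((grad_cont' (hh j)).comp continuous_fst)
  have hne : ∀ n, (A n).Nonempty := by
    intro n
    obtain ⟨y, hyK, hyle, hyJ, c, hcsupp, hcnorm, hlt⟩ := h0 (u n) (hupos n)
    refine ⟨(y, c), ⟨⟨hyK, ?_⟩, ?_, ?_, ?_, ?_⟩⟩
    · show c ∈ Metric.sphere (0:F) 1
      simpa [mem_sphere_zero_iff_norm] using hcnorm
    · exact Set.mem_iInter.2 fun i => hyle i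
    · exact Set.mem_iInter₂.2 fun j hj => hyJ j hj
    · exact Set.mem_iInter₂.2 fun i hi => hcsupp i (Finset.mem_sdiff.1 hi).2
    · exact le_of_lt hlt
  have hmono : ∀ n, A (n + 1) ⊆ A n := by
    intro n p hp
    obtain ⟨hp1, hp2, hp3, hp4, hp5⟩ := hp
    refine ⟨hp1, ?_, ?_, hp4, le_trans hp5 (humono n)⟩
    · exact Set.mem_iInter.2 fun i =>
        le_trans (Set.mem_iInter.1 hp2 i) (humono n)
    · exact Set.mem_iInter₂.2 fun j hj =>
        le_trans (Set.mem_iInter₂.1 hp3 j hj) (humono n)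
  have hcompact : IsCompact (A 0) :=
    (hK.prod (isCompact_sphere _ _)).of_isClosed_subset (hclosed 0)
      (Set.inter_subset_left)
  obtain ⟨p, hp⟩ := IsCompact.nonempty_iInter_of_sequence_nonempty_isCompact_isClosed
    A hmono hne hcompact hclosed
  simp only [Set.mem_iInter] at hp
  set y := p.1
  set c := p.2
  -- extract limit facts
  have hle0 : ∀ (r : ℝ), (∀ n, r ≤ u n) → r ≤ 0 := by
    intro r hr
    by_contra hr0
    push_neg at hr0
    obtain ⟨n, hn⟩ := exists_nat_one_div_lt hr0
    exact absurd (hr n) (not_le.2 (by simpa [hu] using hn))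
  have hyK : y ∈ K := ((hp 0).1).1
  have hcnorm : ‖c‖ = 1 := by
    have := ((hp 0).1).2
    simpa [mem_sphere_zero_iff_norm] using this
  have hfeas : ∀ i, h i y ≤ 0 := fun i =>
    hle0 _ (fun n => Set.mem_iInter.1 (hp n).2.1 i)
  have hact : ∀ j ∈ J, h j y = 0 := fun j hj =>
    abs_nonpos_iff.1 (hle0 _ (fun n => Set.mem_iInter₂.1 (hp n).2.2.1 j hj))
  have hsupp : ∀ i, i ∉ J → c i = 0 := fun i hi =>
    Set.mem_iInter₂.1 (hp 0).2.2.2.1 i (Finset.mem_sdiff.2 ⟨Finset.mem_univ i, hi⟩)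
  have hsum : ∑ j ∈ J, c j • gradient (h j) y = 0 := by
    have := hle0 _ (fun n => (hp n).2.2.2.2)
    exact norm_le_zero_iff.1 this
  -- LICQ contradiction
  have LI := licq y hfeas
  have hJsub : J ⊆ Finset.univ.filter (fun i => h i y = 0) := fun j hj =>
    Finset.mem_filter.2 ⟨Finset.mem_univ j, hact j hj⟩
  have hsum' : ∑ i : {i : Fin k // h i y = 0}, c i.1 • gradient (h i.1) y = 0 := by
    rw [← Finset.sum_subtype (Finset.univ.filter (fun i => h i y = 0))
      (by intro x; simp) (fun i => c i • gradient (h i) y)]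
    rw [← Finset.sum_subset hJsub (fun x _ hx => by rw [hsupp x hx, zero_smul])]
    exact hsum
  have hzero : ∀ i : {i : Fin k // h i y = 0}, c i.1 = 0 :=
    Fintype.linearIndependent_iff.1 LI (fun i => c i.1) hsum'
  have : c = 0 := by
    ext i
    by_cases hi : i ∈ J
    · exact hzero ⟨i, hact i hi⟩
    · exact hsupp i hi
  rw [this, norm_zero] at hcnorm
  norm_num at hcnorm

theorem stmt2 {m k : ℕ}
    (h : Fin k → EuclideanSpace ℝ (Fin m) → ℝ)
    (hh : ∀ i, ContDiff ℝ 1 (h i))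
    (K : Set (EuclideanSpace ℝ (Fin m)))
    (hK : IsCompact K)
    (hYK : {y | ∀ i, h i y ≤ 0} ⊆ interior K)
    (licq : ∀ y, (∀ i, h i y ≤ 0) →
      LinearIndependent ℝ (fun i : {i : Fin k // h i y = 0} => gradient (h i.1) y)) :
    ∃ ρ > (0:ℝ), ∃ σ > (0:ℝ),
      ∀ y ∈ K, (∀ i, h i y ≤ ρ) →
        ∀ J : Finset (Fin k), J.Nonempty → (∀ j ∈ J, |h j y| ≤ ρ) →
          ∀ c : EuclideanSpace ℝ (Fin k), (∀ i, i ∉ J → c i = 0) →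
            σ * ‖c‖ ≤ ‖∑ j ∈ J, c j • gradient (h j) y‖ := by
  have key := fun J => perJ h hh K hK licq J
  choose t ht hspec using key
  set ρ : ℝ := Finset.univ.inf' ⟨∅, Finset.mem_univ _⟩ t with hρ
  have hρpos : 0 < ρ := (Finset.lt_inf'_iff _).2 fun J _ => ht J
  have hρle : ∀ J : Finset (Fin k), ρ ≤ t J := fun J =>
    Finset.inf'_le _ (Finset.mem_univ J)
  refine ⟨ρ, hρpos, ρ, hρpos, fun y hyK hyle J hJne hyJ c hcsupp => ?_⟩
  by_cases hc : c = 0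
  · simp [hc]
  · have hcpos : 0 < ‖c‖ := norm_pos_iff.2 hc
    set c' : EuclideanSpace ℝ (Fin k) := ‖c‖⁻¹ • c with hc'
    have hc'supp : ∀ i, i ∉ J → c' i = 0 := by
      intro i hi
      simp [hc', hcsupp i hi]
    have hc'norm : ‖c'‖ = 1 := norm_smul_inv_norm hc
    have := hspec J y hyK (fun i => le_trans (hyle i) (hρle J))
      (fun j hj => le_trans (hyJ j hj) (hρle J)) c' hc'supp hc'norm
    have hsum : ∑ j ∈ J, c' j • gradient (h j) y
        = ‖c‖⁻¹ • ∑ j ∈ J, c j • gradient (h j) y := by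
      rw [Finset.smul_sum]
      refine Finset.sum_congr rfl fun j _ => ?_
      rw [smul_smul]
      congr 1
    rw [hsum, norm_smul, norm_inv, norm_norm] at this
    calc ρ * ‖c‖ ≤ t J * ‖c‖ :=
          mul_le_mul_of_nonneg_right (hρle J) (norm_nonneg c)
      _ ≤ (‖c‖⁻¹ * ‖∑ j ∈ J, c j • gradient (h j) y‖) * ‖c‖ :=
          mul_le_mul_of_nonneg_right this (norm_nonneg c)
      _ = ‖∑ j ∈ J, c j • gradient (h j) y‖ := by
          field_simp
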